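/- For z, ζ in the open upper half-plane with |ζ| > 1 and z ≠ ζ, the modified Green function satisfies |G_m(z,ζ) − G(z,ζ)| ≤ (1/π) ∑_{k=1}^{m} k y η |z|^{k-1} / |ζ|^{1+k}, where y = Im z and η = Im ζ. -/

import Mathlib

lemma im_pow_le (w : ℂ) (k : ℕ) :
    |(w ^ k).im| ≤ k * |w.im| * ‖w‖ ^ (k - 1) := by
  induction k with
  | zero => simp
  | succ k ih =>
    rcases Nat.eq_zero_or_pos k with hk | hk
    · subst hk; simp
    have h1 : (w ^ (k+1)).im = (w ^ k).re * w.im + (w ^ k).im * w.re := by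
      rw [pow_succ]; simp [Complex.mul_im]
    rw [h1]
    calc |(w ^ k).re * w.im + (w ^ k).im * w.re|
        ≤ |(w ^ k).re * w.im| + |(w ^ k).im * w.re| := abs_add_le _ _
      _ = |(w ^ k).re| * |w.im| + |(w ^ k).im| * |w.re| := by rw [abs_mul, abs_mul]
      _ ≤ ‖w‖ ^ k * |w.im| + (k * |w.im| * ‖w‖ ^ (k-1)) * ‖w‖ := by
          gcongr
          · calc |(w ^ k).re| ≤ ‖w ^ k‖ := Complex.abs_re_le_norm _
              _ = ‖w‖ ^ k := norm_pow _ _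
          · exact Complex.abs_re_le_norm w
      _ = (k+1 : ℕ) * |w.im| * ‖w‖ ^ ((k+1) - 1) := by
          have : ‖w‖ ^ (k-1) * ‖w‖ = ‖w‖ ^ k := by
            rw [← pow_succ, Nat.sub_add_cancel hk]
          simp only [Nat.add_sub_cancel]
          rw [mul_assoc ((k:ℝ) * |w.im|), this]
          push_cast; ring

lemma re_mul_sub_conj (a b : ℂ) :
    (a * b - a * starRingEnd ℂ b).re = -2 * a.im * b.im := by
  simp only [Complex.sub_re, Complex.mul_re, Complex.conj_re, Complex.conj_im]
  ring

lemma im_inv_pow_le (ζ : ℂ) (k : ℕ) (hk : 1 ≤ k) (h1 : 1 < ‖ζ‖) :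
    |((ζ ^ k)⁻¹).im| ≤ k * |ζ.im| / ‖ζ‖ ^ (k + 1) := by
  have h0 : (0:ℝ) < ‖ζ‖ := lt_trans one_pos h1
  rw [← inv_pow]
  calc |(ζ⁻¹ ^ k).im| ≤ k * |ζ⁻¹.im| * ‖ζ⁻¹‖ ^ (k - 1) := im_pow_le _ _
    _ = k * |ζ.im| / ‖ζ‖ ^ (k + 1) := by
        have e : ‖ζ‖ ^ (k+1) = ‖ζ‖ ^ 2 * ‖ζ‖ ^ (k-1) := by
          rw [← pow_add]; congr 1; omega
        rw [Complex.inv_im, norm_inv, abs_div, abs_neg, abs_of_nonneg (Complex.normSq_nonneg ζ),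
          Complex.normSq_eq_norm_sq, e, inv_pow]
        have hk1 : ‖ζ‖ ^ (k-1) ≠ 0 := by positivity
        field_simp

/-- The Green function of the upper half-plane. -/
noncomputable def G (z ζ : ℂ) : ℝ :=
  1 / (2 * Real.pi) *
    (Real.log (‖z - ζ‖) - Real.log (‖z - starRingEnd ℂ ζ‖))

/-- The modified kernel `E_{m+1}` evaluated at `z - ζ` (its correction term depends on `ζ`). -/
noncomputable def Em1 (m : ℕ) (z ζ : ℂ) : ℝ :=
  1 / (2 * Real.pi) * Real.log (‖z - ζ‖) -
    (if 1 < ‖ζ‖ then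
      1 / (2 * Real.pi) *
        (Complex.log ζ - ∑ k ∈ Finset.Icc 1 m, z ^ k / (k * ζ ^ k)).re
    else 0)

/-- The modified Green function `G_m(z,ζ) = E_{m+1}(z-ζ) - E_{m+1}(z-ζ̄)`. -/
noncomputable def Gm (m : ℕ) (z ζ : ℂ) : ℝ :=
  Em1 m z ζ - Em1 m z (starRingEnd ℂ ζ)

theorem stmt6 (m : ℕ) (z ζ : ℂ) (hz : 0 < z.im) (hζ : 0 < ζ.im)
    (h1 : 1 < ‖ζ‖) (hne : z ≠ ζ) :
    |Gm m z ζ - G z ζ| ≤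
      1 / Real.pi * ∑ k ∈ Finset.Icc 1 m,
        (k : ℝ) * z.im * ζ.im * ‖z‖ ^ (k - 1) / ‖ζ‖ ^ (1 + k) := by
  have hπ : 0 < Real.pi := Real.pi_pos
  have h1' : 1 < ‖starRingEnd ℂ ζ‖ := by rwa [Complex.norm_conj]
  have key : Gm m z ζ - G z ζ = 1/(2*Real.pi) * ∑ k ∈ Finset.Icc 1 m,
      (z ^ k / (k * ζ ^ k) - z ^ k / (k * (starRingEnd ℂ ζ) ^ k)).re := by
    simp only [Gm, Em1, G, if_pos h1, if_pos h1', Complex.sub_re, Complex.log_re,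
      Complex.norm_conj, Complex.re_sum, Finset.sum_sub_distrib]
    ring
  have hζ0 : ζ ≠ 0 := by
    intro h; rw [h] at h1; simp at h1; linarith
  have hbound : ∀ k ∈ Finset.Icc 1 m,
      |(z ^ k / (k * ζ ^ k) - z ^ k / (k * (starRingEnd ℂ ζ) ^ k)).re|
      ≤ 2 * ((k:ℝ) * z.im * ζ.im * ‖z‖ ^ (k-1) / ‖ζ‖ ^ (1+k)) := by
    intro k hk
    have hk1 : 1 ≤ k := (Finset.mem_Icc.mp hk).1
    have hk0 : (k:ℂ) ≠ 0 := Nat.cast_ne_zero.mpr (by omega)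
    have hkR : (0:ℝ) < (k:ℝ) := by exact_mod_cast Nat.pos_of_ne_zero (by omega)
    have hζk : ζ ^ k ≠ 0 := pow_ne_zero _ hζ0
    have hcζ0 : starRingEnd ℂ ζ ≠ 0 := by simpa using hζ0
    have hcζk : (starRingEnd ℂ ζ) ^ k ≠ 0 := pow_ne_zero _ hcζ0
    have ht : z ^ k / (k * ζ ^ k) - z ^ k / (k * (starRingEnd ℂ ζ) ^ k)
        = (z ^ k * (ζ ^ k)⁻¹ - z ^ k * starRingEnd ℂ ((ζ ^ k)⁻¹)) / ((k:ℝ) : ℂ) := by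
      rw [map_inv₀, map_pow]
      push_cast
      field_simp
    have hre := re_mul_sub_conj (z ^ k) ((ζ ^ k)⁻¹)
    rw [ht, Complex.div_ofReal_re, hre]
    have A := im_pow_le z k
    have B := im_inv_pow_le ζ k hk1 h1
    calc |(-2 * (z^k).im * ((ζ^k)⁻¹).im) / (k:ℝ)|
        = 2 * |(z^k).im| * |((ζ^k)⁻¹).im| / (k:ℝ) := by
          rw [abs_div, abs_mul, abs_mul, abs_of_pos hkR]; norm_num
      _ ≤ 2 * ((k:ℝ) * |z.im| * ‖z‖ ^ (k-1)) * ((k:ℝ) * |ζ.im| / ‖ζ‖ ^ (k+1)) / (k:ℝ) := by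
          gcongr
      _ = 2 * ((k:ℝ) * z.im * ζ.im * ‖z‖ ^ (k-1) / ‖ζ‖ ^ (1+k)) := by
          rw [abs_of_pos hz, abs_of_pos hζ, add_comm 1 k]
          have hB : ‖ζ‖ ^ (k+1) ≠ 0 := by positivity
          field_simp
  have h2 : |∑ k ∈ Finset.Icc 1 m,
      (z ^ k / (k * ζ ^ k) - z ^ k / (k * (starRingEnd ℂ ζ) ^ k)).re|
      ≤ ∑ k ∈ Finset.Icc 1 m,
        2 * ((k:ℝ) * z.im * ζ.im * ‖z‖ ^ (k-1) / ‖ζ‖ ^ (1+k)) :=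
    (Finset.abs_sum_le_sum_abs _ _).trans (Finset.sum_le_sum hbound)
  rw [key, abs_mul, abs_of_pos (by positivity : (0:ℝ) < 1/(2*Real.pi))]
  calc 1/(2*Real.pi) * |∑ k ∈ Finset.Icc 1 m,
        (z ^ k / (k * ζ ^ k) - z ^ k / (k * (starRingEnd ℂ ζ) ^ k)).re|
      ≤ 1/(2*Real.pi) * ∑ k ∈ Finset.Icc 1 m,
        2 * ((k:ℝ) * z.im * ζ.im * ‖z‖ ^ (k-1) / ‖ζ‖ ^ (1+k)) := by
        exact mul_le_mul_of_nonneg_left h2 (by positivity)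
    _ = 1 / Real.pi * ∑ k ∈ Finset.Icc 1 m,
        (k : ℝ) * z.im * ζ.im * ‖z‖ ^ (k - 1) / ‖ζ‖ ^ (1 + k) := by
        rw [← Finset.mul_sum, ← mul_assoc]
        congr 1
        field_simp
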